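/- Let k₇,k₈,k₉,k₁₀,a₁,a₂,a₃,a₄,a₅ ∈ ℝ with k₁₀ ≠ 0, and set a = k₇/k₁₀, b = k₈/k₁₀, c = (k₉k₁₀ − k₇k₈)/k₁₀². Define A = b(aa₁+a₂) + (ab+c)(aa₃+a₄) − a₅(2ab+c), B = a(aa₃+a₄) − (aa₁+a₂), C = (ab+c)a₃ + b(aa₃+a₄) + b(a₁ − 2a₅), D = aa₃ − a₁ + a₅, E = ba₃, F = aa₃ − a₁. Then A = B = C = D = E = F = 0 if and only if both of the following hold: (i) for all ṫ,ṙ ∈ ℝ and all w > 0 there exists α ∈ ℝ with (a₁ṫ + a₂ṙ, a₃ṫ + a₄ṙ, a₅w) = α·(k₇w, k₁₀w, k₈ṫ + k₉ṙ); and (ii) either a₁ = a₂ = a₃ = a₄ = a₅ = 0 or k₈ = k₉ = 0. (Condition (i) says that the bracket [δ_t,δ_r] = (a₁ṫ+a₂ṙ)∂_ṫ + (a₃ṫ+a₄ṙ)∂_ṙ + a₅w∂_w is pointwise proportional to δ_w = k₇w∂_ṫ + k₁₀w∂_ṙ + (k₈ṫ+k₉ṙ)∂_w, and (ii) says that the proportionality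 factor is zero or b = c = 0.) -/

import Mathlib

noncomputable section

/-- pointwise algebraic form of Lemma 2 of the paper.
`A = B = C = D = E = F = 0` iff the bracket `[δ_t,δ_r]` is pointwise proportional to `δ_w`
and the proportionality factor is zero or `b = c = 0`. -/
theorem stmt9 (k7 k8 k9 k10 a1 a2 a3 a4 a5 a b c A B C D E F : ℝ)
    (hk10 : k10 ≠ 0)
    (ha : a = k7 / k10) (hb : b = k8 / k10) (hc : c = (k9 * k10 - k7 * k8) / k10 ^ 2)
    (hA : A = b * (a * a1 + a2) + (a * b + c) * (a * a3 + a4) - a5 * (2 * a * b + c))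
    (hB : B = a * (a * a3 + a4) - (a * a1 + a2))
    (hC : C = (a * b + c) * a3 + b * (a * a3 + a4) + b * (a1 - 2 * a5))
    (hD : D = a * a3 - a1 + a5) (hE : E = b * a3) (hF : F = a * a3 - a1) :
    (A = 0 ∧ B = 0 ∧ C = 0 ∧ D = 0 ∧ E = 0 ∧ F = 0) ↔
      ((∀ td rd w : ℝ, 0 < w → ∃ α : ℝ,
          a1 * td + a2 * rd = α * (k7 * w) ∧
          a3 * td + a4 * rd = α * (k10 * w) ∧
          a5 * w = α * (k8 * td + k9 * rd)) ∧
        ((a1 = 0 ∧ a2 = 0 ∧ a3 = 0 ∧ a4 = 0 ∧ a5 = 0) ∨ (k8 = 0 ∧ k9 = 0))) := by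
  have hk7 : k7 = a * k10 := by rw [ha]; field_simp
  have hk8 : k8 = b * k10 := by rw [hb]; field_simp
  have hk9 : k9 = (a * b + c) * k10 := by
    rw [ha, hb, hc]; field_simp; ring
  subst hA hB hC hD hE hF
  constructor
  · rintro ⟨hA0, hB0, hC0, hD0, hE0, hF0⟩
    have h1 : a5 = 0 := by linear_combination hD0 - hF0
    have h2 : a1 = a * a3 := by linear_combination -hF0
    have h3 : a2 = a * a4 := by linear_combination a * hF0 - hB0
    have h4 : b * a3 = 0 := hE0
    have h6 : (a * b + c) * a3 + b * a4 = 0 := by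
      linear_combination hC0 - 2 * a * hE0 - b * hF0 + 2 * b * hD0
    have h5 : (a * b + c) * a4 = 0 := by
      linear_combination hA0 + b * hB0 - a * hC0 + a ^ 2 * hE0 + c * hD0 - (a * b + c) * hF0
    constructor
    · intro td rd w hw
      have hw0 : w ≠ 0 := hw.ne'
      refine ⟨(a3 * td + a4 * rd) / (k10 * w), ?_, ?_, ?_⟩
      · rw [hk7, h2, h3]; field_simp
      · rw [div_mul_cancel₀ _ (mul_ne_zero hk10 hw0)]
      · have hnum : (a3 * td + a4 * rd) * (k8 * td + k9 * rd) = 0 := by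
          rw [hk8, hk9]
          linear_combination (k10 * td ^ 2) * h4 + (k10 * td * rd) * h6 + (k10 * rd ^ 2) * h5
        rw [h1, zero_mul, div_mul_eq_mul_div, hnum, zero_div]
    · by_cases ha3 : a3 = 0
      · by_cases ha4 : a4 = 0
        · exact Or.inl ⟨by rw [h2, ha3]; ring, by rw [h3, ha4]; ring, ha3, ha4, h1⟩
        · refine Or.inr ?_
          have habc : a * b + c = 0 := by
            rcases mul_eq_zero.mp h5 with h | h
            · exact h
            · exact absurd h ha4
          have hb0 : b = 0 := by
            have hba4 : b * a4 = 0 := by rw [ha3] at h6; linear_combination h6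
            rcases mul_eq_zero.mp hba4 with h | h
            · exact h
            · exact absurd h ha4
          exact ⟨by rw [hk8, hb0]; ring, by rw [hk9, habc]; ring⟩
      · refine Or.inr ?_
        have hb0 : b = 0 := by
          rcases mul_eq_zero.mp h4 with h | h
          · exact h
          · exact absurd h ha3
        have habc : a * b + c = 0 := by
          have : (a * b + c) * a3 = 0 := by linear_combination h6 - a4 * hb0
          rcases mul_eq_zero.mp this with h | h
          · exact h
          · exact absurd h ha3
        exact ⟨by rw [hk8, hb0]; ring, by rw [hk9, habc]; ring⟩
  · rintro ⟨hprop, -⟩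
    obtain ⟨α0, e01, e02, e03⟩ := hprop 0 0 1 one_pos
    have hα0 : α0 = 0 := by
      have : α0 * k10 = 0 := by linarith [e02]
      rcases mul_eq_zero.mp this with h | h
      · exact h
      · exact absurd h hk10
    have h1 : a5 = 0 := by
      rw [hα0] at e03; linarith [e03]
    obtain ⟨α1, e11, e12, e13⟩ := hprop 1 0 1 one_pos
    have h2 : a1 = a * a3 := by linear_combination e11 - a * e12 + α1 * hk7
    have h4 : b * a3 = 0 := by linear_combination b * e12 - α1 * hk8 - e13 + h1
    obtain ⟨α2, e21, e22, e23⟩ := hprop 0 1 1 one_pos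
    have h3 : a2 = a * a4 := by linear_combination e21 - a * e22 + α2 * hk7
    have h5 : (a * b + c) * a4 = 0 := by
      linear_combination (a * b + c) * e22 - α2 * hk9 - e23 + h1
    obtain ⟨α3, e31, e32, e33⟩ := hprop 1 1 1 one_pos
    have h6 : (a * b + c) * a3 + b * a4 = 0 := by
      linear_combination (a * b + c) * e32 + b * e32 - α3 * hk9 - α3 * hk8 - e33 + h1 - h4 - h5
    refine ⟨?_, ?_, ?_, ?_, ?_, ?_⟩
    · linear_combination a ^ 2 * h4 + a * h6 + h5 + a * b * h2 + b * h3 - (2 * a * b + c) * h1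
    · linear_combination -a * h2 - h3
    · linear_combination h6 + 2 * a * h4 + b * h2 - 2 * b * h1
    · linear_combination h1 - h2
    · exact h4
    · linear_combination -h2
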